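/- Let A be a unital ring, B a ring, and φ : M₂(A) → B an arbitrary function. Then φ is a ring homomorphism if and only if φ is a semigroup homomorphism (i.e. φ(xy) = φ(x)φ(y) for all x, y ∈ M₂(A)) satisfying φ(1) = φ(e₁₁) + φ(e₂₂). -/

import Mathlib

open Matrix

/-- Let `A` be a unital ring, `B` a ring, and
`φ : M₂(A) → B` an arbitrary function.  Then `φ` is a ring homomorphism
(additive and multiplicative) if and only if `φ` is a semigroup
homomorphism satisfying `φ(1) = φ(e₁₁) + φ(e₂₂)`. -/
theorem stmt_0 {A B : Type*} [Ring A] [Ring B]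
    (φ : Matrix (Fin 2) (Fin 2) A → B) :
    ((∀ x y, φ (x + y) = φ x + φ y) ∧ (∀ x y, φ (x * y) = φ x * φ y)) ↔
      ((∀ x y, φ (x * y) = φ x * φ y) ∧
        φ 1 = φ (Matrix.single 0 0 (1 : A)) +
              φ (Matrix.single 1 1 (1 : A))) := by
  have hone : (1 : Matrix (Fin 2) (Fin 2) A)
      = single (0 : Fin 2) 0 1 + single (1 : Fin 2) 1 1 := by
    ext k l
    fin_cases k <;> fin_cases l <;> simp [Matrix.single, Matrix.one_apply]
  constructor
  · rintro ⟨hadd, hmul⟩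
    refine ⟨hmul, ?_⟩
    rw [hone, hadd]
  · rintro ⟨hmul, h1⟩
    set E : Fin 2 → Fin 2 → A → Matrix (Fin 2) (Fin 2) A := fun i j a => single i j a with hE
    -- φ 0 = 0
    have h0 : φ 0 = 0 := by
      have e1 : (0 : Matrix (Fin 2) (Fin 2) A) * 1 = 0 := by simp
      have e2 : (0 : Matrix (Fin 2) (Fin 2) A) * E 0 0 1 = 0 := by simp
      have e3 : (0 : Matrix (Fin 2) (Fin 2) A) * E 1 1 1 = 0 := by simp
      have : φ 0 = φ 0 + φ 0 := by
        calc φ 0 = φ 0 * φ 1 := by rw [← hmul, e1]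
        _ = φ 0 * φ (E 0 0 1) + φ 0 * φ (E 1 1 1) := by rw [h1, mul_add]
        _ = φ 0 + φ 0 := by rw [← hmul, ← hmul, e2, e3]
      have h' : φ 0 + 0 = φ 0 + φ 0 := by rw [add_zero]; exact this
      exact (add_left_cancel h').symm
    -- Peirce decomposition
    have hcorner : ∀ (x : Matrix (Fin 2) (Fin 2) A) (i j : Fin 2),
        E i i 1 * x * E j j 1 = E i j (x i j) := by
      intro x i j
      ext k l
      fin_cases i <;> fin_cases j <;> fin_cases k <;> fin_cases l <;>
        simp [hE, Matrix.mul_apply, Matrix.single, Fin.sum_univ_two]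
    have hpeirce : ∀ x : Matrix (Fin 2) (Fin 2) A,
        φ x = φ (E 0 0 (x 0 0)) + φ (E 0 1 (x 0 1)) + φ (E 1 0 (x 1 0)) + φ (E 1 1 (x 1 1)) := by
      intro x
      have : φ x = φ 1 * φ x * φ 1 := by
        rw [← hmul, ← hmul, one_mul, mul_one]
      rw [this, h1]
      have expand : (φ (E 0 0 1) + φ (E 1 1 1)) * φ x * (φ (E 0 0 1) + φ (E 1 1 1))
          = φ (E 0 0 1) * φ x * φ (E 0 0 1) + φ (E 0 0 1) * φ x * φ (E 1 1 1)
            + φ (E 1 1 1) * φ x * φ (E 0 0 1) + φ (E 1 1 1) * φ x * φ (E 1 1 1) := by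
        simp only [add_mul, mul_add]
        abel
      rw [expand]
      simp only [← hmul, hcorner]
    -- additivity on corner (0,1)
    have h01 : ∀ a b : A, φ (E 0 1 (a + b)) = φ (E 0 1 a) + φ (E 0 1 b) := by
      intro a b
      have key : E 0 1 (a + b) = (E 0 0 1 + E 0 1 a) * (E 0 1 b + E 1 1 1) := by
        ext k l
        fin_cases k <;> fin_cases l <;>
          simp [hE, Matrix.mul_apply, Matrix.single, Fin.sum_univ_two]
        exact add_comm a b
      have hu : φ (E 0 0 1 + E 0 1 a) = φ (E 0 0 1) + φ (E 0 1 a) := by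
        rw [hpeirce (E 0 0 1 + E 0 1 a)]
        have e00 : (E 0 0 1 + E 0 1 a) 0 0 = 1 := by simp [hE, Matrix.single]
        have e01 : (E 0 0 1 + E 0 1 a) 0 1 = a := by simp [hE, Matrix.single]
        have e10 : (E 0 0 1 + E 0 1 a) 1 0 = 0 := by simp [hE, Matrix.single]
        have e11 : (E 0 0 1 + E 0 1 a) 1 1 = 0 := by simp [hE, Matrix.single]
        rw [e00, e01, e10, e11]
        have z1 : E (1:Fin 2) 0 (0:A) = 0 := by ext k l; simp [hE, Matrix.single]
        have z2 : E (1:Fin 2) 1 (0:A) = 0 := by ext k l; simp [hE, Matrix.single]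
        rw [z1, z2, h0]
        abel
      have hv : φ (E 0 1 b + E 1 1 1) = φ (E 0 1 b) + φ (E 1 1 1) := by
        rw [hpeirce (E 0 1 b + E 1 1 1)]
        have e00 : (E 0 1 b + E 1 1 1) 0 0 = 0 := by simp [hE, Matrix.single]
        have e01 : (E 0 1 b + E 1 1 1) 0 1 = b := by simp [hE, Matrix.single]
        have e10 : (E 0 1 b + E 1 1 1) 1 0 = 0 := by simp [hE, Matrix.single]
        have e11 : (E 0 1 b + E 1 1 1) 1 1 = 1 := by simp [hE, Matrix.single]
        rw [e00, e01, e10, e11]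
        have z1 : E (0:Fin 2) 0 (0:A) = 0 := by ext k l; simp [hE, Matrix.single]
        have z2 : E (1:Fin 2) 0 (0:A) = 0 := by ext k l; simp [hE, Matrix.single]
        rw [z1, z2, h0]
        abel
      have m1 : E (0:Fin 2) 0 (1:A) * E 0 1 b = E 0 1 b := by
        ext k l
        fin_cases k <;> fin_cases l <;>
          simp [hE, Matrix.mul_apply, Matrix.single, Fin.sum_univ_two]
      have m2 : E (0:Fin 2) 0 (1:A) * E 1 1 1 = 0 := by
        ext k l
        fin_cases k <;> fin_cases l <;>
          simp [hE, Matrix.mul_apply, Matrix.single, Fin.sum_univ_two]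
      have m3 : E (0:Fin 2) 1 a * E 0 1 b = 0 := by
        ext k l
        fin_cases k <;> fin_cases l <;>
          simp [hE, Matrix.mul_apply, Matrix.single, Fin.sum_univ_two]
      have m4 : E (0:Fin 2) 1 a * E 1 1 1 = E 0 1 a := by
        ext k l
        fin_cases k <;> fin_cases l <;>
          simp [hE, Matrix.mul_apply, Matrix.single, Fin.sum_univ_two]
      calc φ (E 0 1 (a + b)) = φ (E 0 0 1 + E 0 1 a) * φ (E 0 1 b + E 1 1 1) := by
            rw [key, hmul]
        _ = φ (E 0 0 1) * φ (E 0 1 b) + φ (E 0 0 1) * φ (E 1 1 1)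
              + φ (E 0 1 a) * φ (E 0 1 b) + φ (E 0 1 a) * φ (E 1 1 1) := by
            rw [hu, hv]; noncomm_ring
        _ = φ (E 0 1 b) + 0 + 0 + φ (E 0 1 a) := by
            rw [← hmul, ← hmul, ← hmul, ← hmul, m1, m2, m3, m4, h0]
        _ = φ (E 0 1 a) + φ (E 0 1 b) := by abel
    -- derive other corners
    have mul01 : ∀ c : A, E (0:Fin 2) 1 c * E 1 0 1 = E 0 0 c := by
      intro c; ext k l
      fin_cases k <;> fin_cases l <;>
        simp [hE, Matrix.mul_apply, Matrix.single, Fin.sum_univ_two]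
    have h00 : ∀ a b : A, φ (E 0 0 (a + b)) = φ (E 0 0 a) + φ (E 0 0 b) := by
      intro a b
      rw [← mul01, hmul, h01, add_mul, ← hmul, ← hmul, mul01, mul01]
    have mul10 : ∀ c : A, E (1:Fin 2) 0 1 * E 0 1 c = E 1 1 c := by
      intro c; ext k l
      fin_cases k <;> fin_cases l <;>
        simp [hE, Matrix.mul_apply, Matrix.single, Fin.sum_univ_two]
    have h11 : ∀ a b : A, φ (E 1 1 (a + b)) = φ (E 1 1 a) + φ (E 1 1 b) := by
      intro a b
      rw [← mul10, hmul, h01, mul_add, ← hmul, ← hmul, mul10, mul10]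
    have mul11 : ∀ c : A, E (1:Fin 2) 1 c * E 1 0 1 = E 1 0 c := by
      intro c; ext k l
      fin_cases k <;> fin_cases l <;>
        simp [hE, Matrix.mul_apply, Matrix.single, Fin.sum_univ_two]
    have h10 : ∀ a b : A, φ (E 1 0 (a + b)) = φ (E 1 0 a) + φ (E 1 0 b) := by
      intro a b
      rw [← mul11, hmul, h11, add_mul, ← hmul, ← hmul, mul11, mul11]
    -- final additivity
    refine ⟨fun x y => ?_, hmul⟩
    rw [hpeirce (x + y), hpeirce x, hpeirce y]
    have a00 : (x + y) 0 0 = x 0 0 + y 0 0 := rfl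
    have a01 : (x + y) 0 1 = x 0 1 + y 0 1 := rfl
    have a10 : (x + y) 1 0 = x 1 0 + y 1 0 := rfl
    have a11 : (x + y) 1 1 = x 1 1 + y 1 1 := rfl
    rw [a00, a01, a10, a11, h00, h01, h10, h11]
    abel
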